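/- Let Z be a zone over the clock set C and suppose there exists a valuation v ∈ ℝ≥0^C such that v + d ∈ Z for all d ∈ ℝ≥0 (i.e., Z contains a full time-elapse ray, for instance Z contains S↑ for some nonempty set S with S↑ = S). Then Z is closed under time successors: Z↑ = Z. -/

import Mathlib

/-- A bound `(k, ≺)`: an integer `k` together with a strictness flag
(`true` codes `≤`, `false` codes `<`), ordered lexicographically,
so that `(k, <) < (k, ≤) < (k+1, <)`. -/
abbrev Bnd : Type := Lex (ℤ × Bool)

/-- Addition of bounds: `(k,≺) + (k',≺')` is `(k+k', ≺'')` where `≺''` is `≤`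
iff both `≺` and `≺'` are `≤`. -/
instance : Add Bnd :=
  ⟨fun a b => toLex ((ofLex a).1 + (ofLex b).1, (ofLex a).2 && (ofLex b).2)⟩

/-- The zero bound is `(0, ≤)`. -/
instance : Zero Bnd := ⟨toLex (0, true)⟩

instance : AddCommMonoid Bnd where
  add a b := toLex ((ofLex a).1 + (ofLex b).1, (ofLex a).2 && (ofLex b).2)
  zero := toLex (0, true)
  nsmul := nsmulRec
  add_assoc a b c := by
    change toLex (((ofLex a).1 + (ofLex b).1) + (ofLex c).1,
        (((ofLex a).2 && (ofLex b).2) && (ofLex c).2)) =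
      toLex ((ofLex a).1 + ((ofLex b).1 + (ofLex c).1),
        ((ofLex a).2 && ((ofLex b).2 && (ofLex c).2)))
    rw [add_assoc, Bool.and_assoc]
  zero_add a := by
    change toLex ((0 : ℤ) + (ofLex a).1, (true && (ofLex a).2)) = a
    simp
  add_zero a := by
    change toLex ((ofLex a).1 + (0 : ℤ), ((ofLex a).2 && true)) = a
    simp
  add_comm a b := by
    change toLex ((ofLex a).1 + (ofLex b).1, ((ofLex a).2 && (ofLex b).2)) =
      toLex ((ofLex b).1 + (ofLex a).1, ((ofLex b).2 && (ofLex a).2))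
    rw [add_comm, Bool.and_comm]

/-- `satB d b` says that `d ≺ k`, where `b = (k, ≺)`. -/
def satB (d : ℝ) (b : Bnd) : Prop :=
  if (ofLex b).2 then d ≤ ((ofLex b).1 : ℝ) else d < ((ofLex b).1 : ℝ)

variable {C : Type*}

/-- Extended valuation on `C0 = C ∪ {0}`: the special clock `0` is `none`. -/
def val0 (v : C → ℝ) : Option C → ℝ := fun x => x.elim 0 v

/-- The zone defined by a finite set of atomic constraints `x - y ≺ k`. -/
def zoneOf (G : Finset (Option C × Option C × Bnd)) : Set (C → ℝ) :=
  {v | (∀ c, 0 ≤ v c) ∧ ∀ g ∈ G, satB (val0 v g.1 - val0 v g.2.1) g.2.2}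

/-- A zone: a set of (nonnegative) clock valuations defined by a finite set of
atomic constraints. -/
def IsZone (Z : Set (C → ℝ)) : Prop :=
  ∃ G : Finset (Option C × Option C × Bnd), Z = zoneOf G


/-- The set of time successors of a set of valuations:
`S↑ = {v + d : v ∈ S, d ≥ 0}`. -/
def timeSucc (S : Set (C → ℝ)) : Set (C → ℝ) :=
  {w | ∃ v ∈ S, ∃ d : ℝ, 0 ≤ d ∧ w = fun c => v c + d}

lemma satB_anti {d d' : ℝ} {b : Bnd} (h : d' ≤ d) (hb : satB d b) : satB d' b := by
  unfold satB at *
  split at hb <;> simp_all <;> linarith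

/-- If a zone `Z` contains a full time-elapse ray `{v + d : d ≥ 0}` for some
valuation `v ∈ ℝ≥0^C`, then `Z` is closed under time successors: `Z↑ = Z`. -/
theorem zone_with_ray_timeSucc_closed {C : Type*} (Z : Set (C → ℝ))
    (hZ : IsZone Z) (v : C → ℝ) (hv : ∀ c, 0 ≤ v c)
    (hray : ∀ d : ℝ, 0 ≤ d → (fun c => v c + d) ∈ Z) :
    timeSucc Z = Z := by
  obtain ⟨G, rfl⟩ := hZ
  ext w
  constructor
  · rintro ⟨u, hu, d, hd, rfl⟩
    refine ⟨fun c => add_nonneg (hu.1 c) hd, ?_⟩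
    rintro ⟨x, y, b⟩ hg
    have hgu := hu.2 _ hg
    match x, y with
    | some x, some y =>
      have : val0 (fun c => u c + d) (some x) - val0 (fun c => u c + d) (some y)
          = val0 u (some x) - val0 u (some y) := by simp [val0]
      simpa [this] using hgu
    | some x, none =>
      exfalso
      set e : ℝ := max 0 (((ofLex b).1 : ℝ) + 1 - v x) with he
      have h1 := (hray e (le_max_left _ _)).2 _ hg
      simp only [val0, Option.elim] at h1
      have h2 : ((ofLex b).1 : ℝ) + 1 - v x ≤ e := le_max_right _ _
      unfold satB at h1
      split at h1 <;> simp_all <;> linarith [le_max_right (0:ℝ) (((ofLex b).1 : ℝ) + 1 - v x)]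
    | none, some y =>
      have h2 : val0 (fun c => u c + d) none - val0 (fun c => u c + d) (some y)
          ≤ val0 u none - val0 u (some y) := by simp [val0]; linarith
      exact satB_anti h2 hgu
    | none, none => simpa using hgu
  · intro hw
    exact ⟨w, hw, 0, le_refl 0, by funext c; simp⟩
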